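/- Let F be a field equipped with a set 𝒮 of valuations, all with residue characteristic a fixed prime p, satisfying: there exists e ≥ 1 and π ∈ F with 0 < w(π) ≤ e < 2^e for all w ∈ 𝒮. Then the collection of subsets of 𝒮 of the form H(a) = {w ∈ 𝒮 : w(a) ≥ 0}, a ∈ F, forms a Boolean subalgebra of the power set of 𝒮: it is closed under finite intersections and complements (assuming H(1) = 𝒮 is included). -/

import Mathlib

private lemma nsmul_coe_int (n : ℕ) (m : ℤ) :
    n • ((m : WithTop ℤ)) = ((n * m : ℤ) : WithTop ℤ) := by
  rw [← WithTop.coe_nsmul, nsmul_eq_mul]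

/-- Let `F` be a field and `𝒮` a set of (discrete, normalized) valuations
on `F`, all of residue characteristic a fixed prime `p` (i.e. `w(p) > 0`), and suppose
there are `e ≥ 1` and `π ∈ F` with `0 < w(π) ≤ e` for all `w ∈ 𝒮`. Then the collection of
sets `H(a) = {w ∈ 𝒮 : w(a) ≥ 0}`, `a ∈ F`, forms a Boolean subalgebra of the power set of
`𝒮`: it contains `𝒮 = H(1)` and is closed under finite intersections and complements. -/
theorem H_family_boolean_algebra {F : Type*} [Field F]
    (𝒮 : Set (AddValuation F (WithTop ℤ))) (p : ℕ) (hp : p.Prime)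
    (hres : ∀ w ∈ 𝒮, 0 < w (p : F))
    (e : ℕ) (he : 1 ≤ e) (π : F)
    (hπ : ∀ w ∈ 𝒮, 0 < w π ∧ w π ≤ ((e : ℤ) : WithTop ℤ)) :
    ({w ∈ 𝒮 | 0 ≤ w 1} = 𝒮) ∧
    (∀ a b : F, ∃ c : F, {w ∈ 𝒮 | 0 ≤ w a} ∩ {w ∈ 𝒮 | 0 ≤ w b} = {w ∈ 𝒮 | 0 ≤ w c}) ∧
    (∀ a : F, ∃ c : F, 𝒮 \ {w ∈ 𝒮 | 0 ≤ w a} = {w ∈ 𝒮 | 0 ≤ w c}) := by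
  set N := 2 ^ e with hNdef
  have heN : (e : ℤ) < (N : ℤ) := by exact_mod_cast Nat.lt_two_pow_self (n := e)
  have hN1 : 1 ≤ (N : ℤ) := by omega
  -- extract the integer value of w π
  have hπk : ∀ w ∈ 𝒮, ∃ k : ℤ, w π = (k : WithTop ℤ) ∧ 1 ≤ k ∧ k ≤ (e : ℤ) := by
    intro w hw
    obtain ⟨h1, h2⟩ := hπ w hw
    have hne : w π ≠ ⊤ := ne_top_of_le_ne_top (WithTop.coe_ne_top) h2
    obtain ⟨k, hk⟩ := WithTop.ne_top_iff_exists.mp hne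
    refine ⟨k, hk.symm, ?_, ?_⟩
    · have : (0 : WithTop ℤ) < (k : WithTop ℤ) := hk ▸ h1
      exact_mod_cast this
    · exact_mod_cast hk ▸ h2
  refine ⟨?_, ?_, ?_⟩
  · ext w
    simp
  · -- intersection: c = a^N + π * b^N
    intro a b
    refine ⟨a ^ N + π * b ^ N, ?_⟩
    ext w
    simp only [Set.mem_inter_iff, Set.mem_setOf_eq]
    constructor
    · rintro ⟨⟨hw, ha⟩, _, hb⟩
      refine ⟨hw, le_trans (le_min ?_ ?_) (w.map_add _ _)⟩
      · rw [w.map_pow]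
        exact nsmul_nonneg ha N
      · rw [w.map_mul, w.map_pow]
        exact add_nonneg (hπ w hw).1.le (nsmul_nonneg hb N)
    · rintro ⟨hw, hc⟩
      refine ⟨⟨hw, ?_⟩, hw, ?_⟩ <;> by_contra h <;> push_neg at h
      · -- w a < 0, derive w c < 0
        obtain ⟨k, hk, hk1, hke⟩ := hπk w hw
        have hane : w a ≠ ⊤ := fun ht => by rw [ht] at h; exact (not_top_lt h)
        obtain ⟨m, hm⟩ := WithTop.ne_top_iff_exists.mp hane
        have hm0 : m < 0 := by
          have : (m : WithTop ℤ) < 0 := hm ▸ h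
          exact_mod_cast this
        have haN : w (a ^ N) = ((N * m : ℤ) : WithTop ℤ) := by
          rw [w.map_pow, ← hm, nsmul_coe_int]
        have hNm : (N : ℤ) * m < 0 := by nlinarith
        rcases le_or_gt 0 (w b) with hb | hb
        · -- w(a^N) < w(π b^N), so w c = w(a^N) < 0
          have hlt : w (a ^ N) < w (π * b ^ N) := by
            rw [haN, w.map_mul, w.map_pow]
            calc ((N * m : ℤ) : WithTop ℤ) < 0 := by exact_mod_cast hNm
            _ ≤ w π + N • w b := add_nonneg (hπ w hw).1.le (nsmul_nonneg hb N)
          rw [w.map_add_eq_of_lt_left hlt, haN] at hc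
          have : (0:ℤ) ≤ N * m := by exact_mod_cast hc
          omega
        · have hbne : w b ≠ ⊤ := fun ht => by rw [ht] at hb; exact (not_top_lt hb)
          obtain ⟨n, hn⟩ := WithTop.ne_top_iff_exists.mp hbne
          have hn0 : n < 0 := by
            have : (n : WithTop ℤ) < 0 := hn ▸ hb
            exact_mod_cast this
          have hbN : w (π * b ^ N) = ((k + N * n : ℤ) : WithTop ℤ) := by
            rw [w.map_mul, w.map_pow, hk, ← hn, nsmul_coe_int, ← WithTop.coe_add]
          have hkn : k + (N:ℤ) * n < 0 := by nlinarith
          have hne : w (a ^ N) ≠ w (π * b ^ N) := by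
            rw [haN, hbN]
            intro hEq
            have hEq' : (N:ℤ) * m = k + N * n := by exact_mod_cast hEq
            have hdvd : (N:ℤ) ∣ k := ⟨m - n, by linarith [mul_sub (N:ℤ) m n]⟩
            have := Int.le_of_dvd (by omega) hdvd
            omega
          rw [w.map_add_of_distinct_val hne, haN, hbN] at hc
          have h1 := le_trans hc (min_le_left _ _)
          have h2 := le_trans hc (min_le_right _ _)
          have : (0:ℤ) ≤ N * m := by exact_mod_cast h1
          omega
      · -- w b < 0, derive w c < 0
        obtain ⟨k, hk, hk1, hke⟩ := hπk w hw
        have hbne : w b ≠ ⊤ := fun ht => by rw [ht] at h; exact (not_top_lt h)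
        obtain ⟨n, hn⟩ := WithTop.ne_top_iff_exists.mp hbne
        have hn0 : n < 0 := by
          have : (n : WithTop ℤ) < 0 := hn ▸ h
          exact_mod_cast this
        have hbN : w (π * b ^ N) = ((k + N * n : ℤ) : WithTop ℤ) := by
          rw [w.map_mul, w.map_pow, hk, ← hn, nsmul_coe_int, ← WithTop.coe_add]
        have hkn : k + (N:ℤ) * n < 0 := by nlinarith
        rcases le_or_gt 0 (w a) with ha | ha
        · have hlt : w (π * b ^ N) < w (a ^ N) := by
            rw [hbN, w.map_pow]
            calc ((k + N * n : ℤ) : WithTop ℤ) < 0 := by exact_mod_cast hkn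
            _ ≤ N • w a := nsmul_nonneg ha N
          rw [w.map_add_eq_of_lt_right hlt, hbN] at hc
          have : (0:ℤ) ≤ k + N * n := by exact_mod_cast hc
          omega
        · have hane : w a ≠ ⊤ := fun ht => by rw [ht] at ha; exact (not_top_lt ha)
          obtain ⟨m, hm⟩ := WithTop.ne_top_iff_exists.mp hane
          have hm0 : m < 0 := by
            have : (m : WithTop ℤ) < 0 := hm ▸ ha
            exact_mod_cast this
          have haN : w (a ^ N) = ((N * m : ℤ) : WithTop ℤ) := by
            rw [w.map_pow, ← hm, nsmul_coe_int]
          have hNm : (N : ℤ) * m < 0 := by nlinarith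
          have hne : w (a ^ N) ≠ w (π * b ^ N) := by
            rw [haN, hbN]
            intro hEq
            have hEq' : (N:ℤ) * m = k + N * n := by exact_mod_cast hEq
            have hdvd : (N:ℤ) ∣ k := ⟨m - n, by linarith [mul_sub (N:ℤ) m n]⟩
            have := Int.le_of_dvd (by omega) hdvd
            omega
          rw [w.map_add_of_distinct_val hne, haN, hbN] at hc
          have h2 := le_trans hc (min_le_right _ _)
          have : (0:ℤ) ≤ k + N * n := by exact_mod_cast h2
          omega
  · -- complement
    intro a
    by_cases ha0 : a = 0
    · refine ⟨π⁻¹, ?_⟩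
      ext w
      subst ha0
      simp only [Set.mem_diff, Set.mem_setOf_eq, AddValuation.map_inv]
      constructor
      · rintro ⟨hw, hna⟩
        exact absurd ⟨hw, le_top.trans_eq (w.map_zero).symm⟩ hna
      · rintro ⟨hw, hc⟩
        obtain ⟨k, hk, hk1, hke⟩ := hπk w hw
        rw [hk] at hc
        have : (0 : WithTop ℤ) ≤ ((-k : ℤ) : WithTop ℤ) := by
          rw [WithTop.LinearOrderedAddCommGroup.coe_neg]; exact hc
        have : (0:ℤ) ≤ -k := by exact_mod_cast this
        omega
    · refine ⟨(π * a ^ N)⁻¹, ?_⟩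
      ext w
      simp only [Set.mem_diff, Set.mem_setOf_eq, AddValuation.map_inv]
      constructor
      · rintro ⟨hw, hna⟩
        have ha : ¬ (0 ≤ w a) := fun h => hna ⟨hw, h⟩
        push_neg at ha
        obtain ⟨k, hk, hk1, hke⟩ := hπk w hw
        have hane : w a ≠ ⊤ := fun ht => by rw [ht] at ha; exact (not_top_lt ha)
        obtain ⟨m, hm⟩ := WithTop.ne_top_iff_exists.mp hane
        have hm0 : m < 0 := by
          have : (m : WithTop ℤ) < 0 := hm ▸ ha
          exact_mod_cast this
        refine ⟨hw, ?_⟩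
        have hval : w (π * a ^ N) = ((k + N * m : ℤ) : WithTop ℤ) := by
          rw [w.map_mul, w.map_pow, hk, ← hm, nsmul_coe_int, ← WithTop.coe_add]
        rw [hval, ← WithTop.LinearOrderedAddCommGroup.coe_neg]
        have : (0:ℤ) ≤ -(k + N * m) := by nlinarith
        exact_mod_cast this
      · rintro ⟨hw, hc⟩
        refine ⟨hw, ?_⟩
        rintro ⟨-, ha⟩
        obtain ⟨k, hk, hk1, hke⟩ := hπk w hw
        have hval : 0 < w (π * a ^ N) := by
          rw [w.map_mul]
          calc (0 : WithTop ℤ) < w π := (hπ w hw).1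
          _ ≤ w π + w (a ^ N) := le_add_of_nonneg_right (by rw [w.map_pow]; exact nsmul_nonneg ha N)
        have hne : w (π * a ^ N) ≠ ⊤ := by
          rw [w.map_mul, hk]
          intro ht
          have : w (a ^ N) = ⊤ := by
            by_contra hne'
            obtain ⟨q, hq⟩ := WithTop.ne_top_iff_exists.mp hne'
            rw [← hq, ← WithTop.coe_add] at ht
            exact WithTop.coe_ne_top ht
          exact (pow_ne_zero N ha0) (w.top_iff.mp this)
        obtain ⟨q, hq⟩ := WithTop.ne_top_iff_exists.mp hne
        rw [← hq, ← WithTop.LinearOrderedAddCommGroup.coe_neg] at hc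
        have hq0 : 0 < q := by
          have : (0 : WithTop ℤ) < (q : WithTop ℤ) := hq ▸ hval
          exact_mod_cast this
        have : (0:ℤ) ≤ -q := by exact_mod_cast hc
        omega
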